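/- Let h : E → ℝ be differentiable with ρ-Lipschitz gradient (ρ ≥ 0), let δ ∈ E satisfy ‖δ‖² ≤ B for some B ≥ 0, and let λ > Bρ. Then for every x ∈ E, (sup_{τ ∈ ℝ} [ h(x + τδ) − (λ/2)τ² ]) − h(x) ≤ (1/(2(λ − Bρ))) ⟪δ, ∇h(x)⟫². (Proposition 1, upper bound.) -/

import Mathlib

open scoped RealInnerProductSpace

/-- **Proposition 1, upper bound.** For a `ρ`-smooth `h`, a direction `δ` with `‖δ‖² ≤ B`, and
`λ > Bρ`, `sup_τ [h(x + τδ) − (λ/2)τ²] − h(x) ≤ (1/(2(λ − Bρ))) ⟪δ, ∇h(x)⟫²`. -/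
theorem uad_pca_upper_bound
    {E : Type*} [NormedAddCommGroup E] [InnerProductSpace ℝ E] [CompleteSpace E]
    (h : E → ℝ) (ρ : ℝ) (hρ : 0 ≤ ρ)
    (hdiff : ∀ x, DifferentiableAt ℝ h x)
    (hlip : ∀ x x' : E, ‖gradient h x - gradient h x'‖ ≤ ρ * ‖x - x'‖)
    (δ : E) (B : ℝ) (hB : 0 ≤ B) (hδ : ‖δ‖ ^ 2 ≤ B)
    (lam : ℝ) (hlam : B * ρ < lam)
    (x : E) :
    sSup (Set.range fun τ : ℝ => h (x + τ • δ) - lam / 2 * τ ^ 2) - h x ≤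
      (1 / (2 * (lam - B * ρ))) * ⟪δ, gradient h x⟫ ^ 2 := by
  set c : ℝ := ⟪δ, gradient h x⟫ with hc
  -- derivative of φ τ = h (x + τ • δ)
  have hφ : ∀ y : ℝ, HasDerivAt (fun τ : ℝ => h (x + τ • δ))
      ⟪gradient h (x + y • δ), δ⟫ y := by
    intro y
    have h1 : HasDerivAt (fun τ : ℝ => x + τ • δ) δ y := by
      simpa using ((hasDerivAt_id y).smul_const δ).const_add x
    have h2 := ((hdiff (x + y • δ)).hasGradientAt.hasFDerivAt).comp_hasDerivAt y h1
    simpa [Function.comp_def] using h2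
  -- bound on the derivative deviation
  have habs : ∀ y : ℝ, |⟪gradient h (x + y • δ), δ⟫ - c| ≤ ρ * B * |y| := by
    intro y
    have h3 : ⟪gradient h (x + y • δ) - gradient h x, δ⟫
        = ⟪gradient h (x + y • δ), δ⟫ - c := by
      rw [inner_sub_left, hc, real_inner_comm δ (gradient h x)]
    have h1 : |⟪gradient h (x + y • δ) - gradient h x, δ⟫|
        ≤ ‖gradient h (x + y • δ) - gradient h x‖ * ‖δ‖ := abs_real_inner_le_norm _ _
    have h2 : ‖gradient h (x + y • δ) - gradient h x‖ ≤ ρ * (|y| * ‖δ‖) := by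
      have := hlip (x + y • δ) x
      simpa [norm_smul, Real.norm_eq_abs] using this
    have h4 : ‖gradient h (x + y • δ) - gradient h x‖ * ‖δ‖ ≤ ρ * B * |y| := by
      have hn : (0:ℝ) ≤ ‖δ‖ := norm_nonneg _
      nlinarith [mul_le_mul_of_nonneg_right h2 hn,
        mul_le_mul_of_nonneg_left hδ (mul_nonneg hρ (abs_nonneg y))]
    rw [← h3]
    exact h1.trans h4
  -- descent lemma
  have key : ∀ τ : ℝ, h (x + τ • δ) ≤ h x + τ * c + ρ * B / 2 * τ ^ 2 := by
    intro τ
    set ψ : ℝ → ℝ := fun τ => h (x + τ • δ) - τ * c - ρ * B / 2 * τ ^ 2 with hψ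
    have hψd : ∀ y : ℝ, HasDerivAt ψ
        (⟪gradient h (x + y • δ), δ⟫ - c - ρ * B * y) y := by
      intro y
      have := ((hφ y).sub ((hasDerivAt_id y).mul_const c)).sub
        (((hasDerivAt_pow 2 y).const_mul (ρ * B / 2)))
      exact this.congr_deriv (by norm_num; ring)
    have hcont : Continuous ψ := by
      have hd : Differentiable ℝ ψ := fun y => (hψd y).differentiableAt
      exact hd.continuous
    have hψle : ψ τ ≤ ψ 0 := by
      rcases le_or_gt 0 τ with hτ | hτ
      · have hanti : AntitoneOn ψ (Set.Ici (0:ℝ)) := by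
          apply antitoneOn_of_deriv_nonpos (convex_Ici 0) hcont.continuousOn
            (fun y _ => (hψd y).differentiableAt.differentiableWithinAt)
          intro y hy
          rw [interior_Ici] at hy
          rw [(hψd y).deriv]
          have := (abs_le.mp (habs y)).2
          rw [abs_of_pos hy] at this
          linarith
        exact hanti (Set.self_mem_Ici) hτ hτ
      · have hmono : MonotoneOn ψ (Set.Iic (0:ℝ)) := by
          apply monotoneOn_of_deriv_nonneg (convex_Iic 0) hcont.continuousOn
            (fun y _ => (hψd y).differentiableAt.differentiableWithinAt)
          intro y hy
          rw [interior_Iic] at hy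
          rw [(hψd y).deriv]
          have := (abs_le.mp (habs y)).1
          rw [abs_of_neg hy] at this
          linarith
        exact hmono hτ.le (Set.self_mem_Iic) hτ.le
    have h2 : h (x + τ • δ) - τ * c - ρ * B / 2 * τ ^ 2 ≤ h x := by
      simpa [hψ] using hψle
    linarith
  -- now bound the sup
  have hk : 0 < lam - B * ρ := by linarith
  rw [sub_le_iff_le_add]
  apply csSup_le (Set.range_nonempty _)
  rintro _ ⟨τ, rfl⟩
  have hkey := key τ
  have hq : τ * c - (lam - B * ρ) / 2 * τ ^ 2 ≤ 1 / (2 * (lam - B * ρ)) * c ^ 2 := by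
    rw [show (1:ℝ) / (2 * (lam - B * ρ)) * c ^ 2 = c ^ 2 / (2 * (lam - B * ρ)) by ring,
      le_div_iff₀ (by linarith)]
    nlinarith [sq_nonneg (c - (lam - B * ρ) * τ)]
  linarith
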